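/- Let f : Y → X be a contraction (i.e., O_X → f_*O_Y is an isomorphism) of varieties over a field k. If Y is a seminormal variety, then X is a seminormal variety. -/

import Mathlib

open AlgebraicGeometry CategoryTheory

universe u

/-- A reduced commutative ring `A` is seminormal (Swan) if whenever `b, c ∈ A` satisfy
`b³ = c²`, there exists `a ∈ A` with `a² = b` and `a³ = c`. -/
def IsSeminormalRing (A : Type*) [CommRing A] : Prop :=
  ∀ b c : A, b ^ 3 = c ^ 2 → ∃ a : A, a ^ 2 = b ∧ a ^ 3 = c

/-- A (reduced) scheme is seminormal if all of its local rings are seminormal rings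
(seminormality is a local property, and for an affine variety this is equivalent to
seminormality of its coordinate ring, i.e. to the seminormalization
`sn_X : X^{sn} → X` being an isomorphism). -/
def Scheme.IsSeminormal (X : AlgebraicGeometry.Scheme.{u}) : Prop :=
  ∀ x : X, IsSeminormalRing (X.presheaf.stalk x)

/-- In a reduced ring, an element is determined by its square and its cube. -/
theorem sn_unique {A : Type*} [CommRing A] [IsReduced A] {a a' : A}
    (h2 : a ^ 2 = a' ^ 2) (h3 : a ^ 3 = a' ^ 3) : a = a' := by
  have h : (a - a') ^ 3 = 0 := by linear_combination 4 * h3 - 3 * (a + a') * h2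
  exact sub_eq_zero.mp (IsNilpotent.eq_zero ⟨3, h⟩)

/-- Seminormality transfers along ring isomorphisms. -/
theorem IsSeminormalRing.of_ringEquiv {A B : Type*} [CommRing A] [CommRing B]
    (e : A ≃+* B) (hB : IsSeminormalRing B) : IsSeminormalRing A := by
  intro b c h
  obtain ⟨a, ha2, ha3⟩ := hB (e b) (e c) (by rw [← map_pow, ← map_pow, h])
  refine ⟨e.symm a, ?_, ?_⟩
  · rw [← map_pow, ha2, e.symm_apply_apply]
  · rw [← map_pow, ha3, e.symm_apply_apply]

/-- If a reduced scheme has seminormal stalks, then all of its rings of sections are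
seminormal: local solutions on stalks spread out to local sections, which are unique by
reducedness and hence glue. -/
theorem isSeminormalRing_sections_of_stalks (Y : AlgebraicGeometry.Scheme.{u}) [IsReduced Y]
    (hY : Scheme.IsSeminormal Y) (V : Y.Opens) :
    IsSeminormalRing (Y.presheaf.obj (Opposite.op V)) := by
  intro b c hbc
  -- For each point `y ∈ V`, find an open `W y ≤ V` containing `y` and a section `t y` on `W y`
  -- with `(t y)² = b|_{W y}` and `(t y)³ = c|_{W y}`.
  have key : ∀ y : V, ∃ (W : Y.Opens) (m : (y : Y) ∈ W) (iWV : W ⟶ V)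
      (t : Y.presheaf.obj (Opposite.op W)),
      t ^ 2 = Y.presheaf.map iWV.op b ∧ t ^ 3 = Y.presheaf.map iWV.op c := by
    intro y
    obtain ⟨a, ha2, ha3⟩ := hY y (Y.presheaf.germ V y y.2 b) (Y.presheaf.germ V y y.2 c)
      (by rw [← map_pow, ← map_pow, hbc])
    obtain ⟨W₀, m₀, s, hs⟩ := Y.presheaf.germ_exist (x := (y : Y)) a
    rw [← hs] at ha2 ha3
    rw [← map_pow] at ha2
    rw [← map_pow] at ha3
    obtain ⟨W₁, m₁, i₁, j₁, h₁⟩ := Y.presheaf.germ_eq (y : Y) m₀ y.2 _ _ ha2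
    obtain ⟨W₂, m₂, i₂, j₂, h₂⟩ := Y.presheaf.germ_eq (y : Y) m₀ y.2 _ _ ha3
    refine ⟨W₁ ⊓ W₂, ⟨m₁, m₂⟩, homOfLE ((inf_le_left : W₁ ⊓ W₂ ≤ W₁).trans j₁.le),
      Y.presheaf.map ((homOfLE (inf_le_left : W₁ ⊓ W₂ ≤ W₁)) ≫ i₁).op s, ?_, ?_⟩
    · have := congrArg (Y.presheaf.map (homOfLE (inf_le_left : W₁ ⊓ W₂ ≤ W₁)).op) h₁
      rw [← CategoryTheory.comp_apply, ← CategoryTheory.comp_apply,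
        ← Y.presheaf.map_comp, ← Y.presheaf.map_comp, ← op_comp, ← op_comp] at this
      rw [← map_pow, this]
      congr 1
    · have e : (homOfLE (inf_le_left : W₁ ⊓ W₂ ≤ W₁)) ≫ i₁ =
          (homOfLE (inf_le_right : W₁ ⊓ W₂ ≤ W₂)) ≫ i₂ := Subsingleton.elim _ _
      have := congrArg (Y.presheaf.map (homOfLE (inf_le_right : W₁ ⊓ W₂ ≤ W₂)).op) h₂
      rw [← CategoryTheory.comp_apply, ← CategoryTheory.comp_apply,
        ← Y.presheaf.map_comp, ← Y.presheaf.map_comp, ← op_comp, ← op_comp] at this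
      rw [← map_pow, e, this]
      congr 1
  choose W m iWV t ht2 ht3 using key
  -- germs of the `t y` solve the problem at each stalk
  have germ_sq : ∀ (y : V) (p : Y) (hp : p ∈ W y),
      (Y.presheaf.germ (W y) p hp (t y)) ^ 2 = Y.presheaf.germ V p ((iWV y).le hp) b := by
    intro y p hp
    rw [← map_pow, ht2 y, Y.presheaf.germ_res_apply]
  have germ_cb : ∀ (y : V) (p : Y) (hp : p ∈ W y),
      (Y.presheaf.germ (W y) p hp (t y)) ^ 3 = Y.presheaf.germ V p ((iWV y).le hp) c := by
    intro y p hp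
    rw [← map_pow, ht3 y, Y.presheaf.germ_res_apply]
  -- compatibility of the family `t`
  have compat : TopCat.Presheaf.IsCompatible Y.sheaf.1 W t := by
    intro i j
    apply TopCat.Presheaf.section_ext Y.sheaf
    intro p hp
    have hpi : p ∈ W i := hp.1
    have hpj : p ∈ W j := hp.2
    show Y.presheaf.germ (W i ⊓ W j) p hp
        (Y.presheaf.map (homOfLE (inf_le_left : W i ⊓ W j ≤ W i)).op (t i)) =
      Y.presheaf.germ (W i ⊓ W j) p hp
        (Y.presheaf.map (homOfLE (inf_le_right : W i ⊓ W j ≤ W j)).op (t j))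
    rw [Y.presheaf.germ_res_apply, Y.presheaf.germ_res_apply]
    exact sn_unique (by rw [germ_sq i p hpi, germ_sq j p hpj])
      (by rw [germ_cb i p hpi, germ_cb j p hpj])
  obtain ⟨a, ha, -⟩ := Y.sheaf.existsUnique_gluing' W V iWV (fun p hp =>
      TopologicalSpace.Opens.mem_iSup.mpr ⟨⟨p, hp⟩, m ⟨p, hp⟩⟩) t compat
  obtain ⟨a, rfl⟩ : ∃ a' : Y.presheaf.obj (Opposite.op V), a' = a := ⟨a, rfl⟩
  have ha' : ∀ i : V, Y.presheaf.map (iWV i).op a = t i := ha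
  refine ⟨a, ?_, ?_⟩
  · apply TopCat.Presheaf.section_ext Y.sheaf
    intro p hp
    show Y.presheaf.germ V p hp (a ^ 2) = Y.presheaf.germ V p hp b
    rw [map_pow, ← Y.presheaf.germ_res_apply (iWV ⟨p, hp⟩) p (m ⟨p, hp⟩) a, ha' ⟨p, hp⟩,
      germ_sq ⟨p, hp⟩ p (m ⟨p, hp⟩)]
  · apply TopCat.Presheaf.section_ext Y.sheaf
    intro p hp
    show Y.presheaf.germ V p hp (a ^ 3) = Y.presheaf.germ V p hp c
    rw [map_pow, ← Y.presheaf.germ_res_apply (iWV ⟨p, hp⟩) p (m ⟨p, hp⟩) a, ha' ⟨p, hp⟩,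
      germ_cb ⟨p, hp⟩ p (m ⟨p, hp⟩)]

/-- Let `f : Y → X` be a contraction (`O_X → f_*O_Y` an isomorphism) of varieties over a
field `k` (reduced schemes of finite type over `k`).  If `Y` is seminormal, then `X` is
seminormal. -/
theorem seminormal_of_contraction (k : Type u) [Field k]
    {X Y : AlgebraicGeometry.Scheme.{u}}
    (πX : X ⟶ Spec (CommRingCat.of k)) (πY : Y ⟶ Spec (CommRingCat.of k))
    [IsReduced X] [IsReduced Y] [LocallyOfFiniteType πX] [LocallyOfFiniteType πY]
    [QuasiCompact πX] [QuasiCompact πY]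
    (f : Y ⟶ X) (hover : f ≫ πX = πY)
    (hc : ∀ U : X.Opens, IsIso (f.app U))
    (hY : Scheme.IsSeminormal Y) :
    Scheme.IsSeminormal X := by
  intro x b c hbc
  -- represent `b` and `c` by sections on a common open neighbourhood of `x`
  obtain ⟨U₁, m₁, b₁, hb₁⟩ := X.presheaf.germ_exist (x := x) b
  obtain ⟨U₂, m₂, c₂, hc₂⟩ := X.presheaf.germ_exist (x := x) c
  have mU : x ∈ U₁ ⊓ U₂ := ⟨m₁, m₂⟩
  obtain ⟨bU, hgb⟩ : ∃ bU, X.presheaf.germ (U₁ ⊓ U₂) x mU bU = b :=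
    ⟨X.presheaf.map (homOfLE (inf_le_left : U₁ ⊓ U₂ ≤ U₁)).op b₁, by
      rw [X.presheaf.germ_res_apply]; exact hb₁⟩
  obtain ⟨cU, hgc⟩ : ∃ cU, X.presheaf.germ (U₁ ⊓ U₂) x mU cU = c :=
    ⟨X.presheaf.map (homOfLE (inf_le_right : U₁ ⊓ U₂ ≤ U₂)).op c₂, by
      rw [X.presheaf.germ_res_apply]; exact hc₂⟩
  -- shrink so that the relation `b³ = c²` holds on the level of sections
  have hg : X.presheaf.germ (U₁ ⊓ U₂) x mU (bU ^ 3) =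
      X.presheaf.germ (U₁ ⊓ U₂) x mU (cU ^ 2) := by
    rw [map_pow, map_pow, hgb, hgc, hbc]
  obtain ⟨W, mW, iW₁, iW₂, hW⟩ := X.presheaf.germ_eq x mU mU _ _ hg
  have hbcW : (X.presheaf.map iW₁.op bU) ^ 3 = (X.presheaf.map iW₁.op cU) ^ 2 := by
    rw [← map_pow, ← map_pow, hW, Subsingleton.elim iW₂ iW₁]
  -- the sections of `X` on `W` are isomorphic to the sections of `Y` on `f ⁻¹ᵁ W`,
  -- which form a seminormal ring
  have : IsIso (f.app W) := hc W
  have hsn : IsSeminormalRing (X.presheaf.obj (Opposite.op W)) :=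
    IsSeminormalRing.of_ringEquiv ((asIso (f.app W)).commRingCatIsoToRingEquiv)
      (isSeminormalRing_sections_of_stalks Y hY _)
  obtain ⟨a, ha2, ha3⟩ := hsn _ _ hbcW
  refine ⟨X.presheaf.germ W x mW a, ?_, ?_⟩
  · rw [← map_pow, ha2, X.presheaf.germ_res_apply, hgb]
  · rw [← map_pow, ha3, X.presheaf.germ_res_apply, hgc]
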